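/- For z ∈ ℂⁿ with z ≠ 0 and 0 < a, ε < 1, let B_{a,ε,z} = {ξ ∈ ℂⁿ \ {0} : ‖z/‖z‖ - ξ/‖ξ‖‖ < a and ‖z‖ ≤ ‖ξ‖ ≤ (1+ε)‖z‖}. Then there exist constants C₁, C₂ > 0, depending only on n, such that C₁ · a^{2n-1} · ε < Vol_{2n}(B_{a,ε,z}) < C₂ · a^{2n-1} · ε for every 0 < ε < 1/2, 0 < a < 1/2 and every z with 1/2 < ‖z‖ < 1-a. -/

import Mathlib

open MeasureTheory Filter Metric Topology ENNReal

noncomputable section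

/-- `ℂⁿ` with its Euclidean structure. -/
abbrev Cn (n : ℕ) : Type := EuclideanSpace ℂ (Fin n)

instance (n : ℕ) : MeasurableSpace (Cn n) := MeasurableSpace.comap WithLp.ofLp MeasurableSpace.pi

instance (n : ℕ) : BorelSpace (Cn n) := PiLp.borelSpace 2

instance (n : ℕ) : MeasureSpace (Cn n) :=
  ⟨(MeasureTheory.MeasureSpace.pi.volume : Measure (Fin n → ℂ)).map (WithLp.toLp 2)⟩

variable {n : ℕ}

/-- The "positive part" of an extended real number, as an element of `ℝ≥0∞`. -/
def EReal.posPart (x : EReal) : ℝ≥0∞ := if x = ⊤ then ⊤ else ENNReal.ofReal x.toReal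

/-- The (possibly infinite) integral of an `EReal`-valued function, defined as the
difference of the lower integrals of its positive and negative parts. -/
def erealIntegral {α : Type*} [MeasurableSpace α] (μ : Measure α) (f : α → EReal) : EReal :=
  ((∫⁻ a, (f a).posPart ∂μ : ℝ≥0∞) : EReal) - ((∫⁻ a, (-(f a)).posPart ∂μ : ℝ≥0∞) : EReal)

/-- A function `u : ℂⁿ → [-∞, ∞)` is plurisubharmonic on an (open) set `Ω` if it is upper
semicontinuous on `Ω`, takes values in `[-∞, ∞)` on `Ω`, and satisfies the sub-mean value
inequality on every circle (inside `Ω`) contained in a complex line. -/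
def PlurisubharmonicOn (Ω : Set (Cn n)) (u : Cn n → EReal) : Prop :=
  UpperSemicontinuousOn u Ω ∧ (∀ z ∈ Ω, u z ≠ ⊤) ∧
  ∀ z ∈ Ω, ∀ w : Cn n, ∀ r : ℝ, 0 < r →
    (∀ c : ℂ, ‖c‖ ≤ r → z + c • w ∈ Ω) →
    ((2 * Real.pi : ℝ) : EReal) * u z ≤
      erealIntegral (volume.restrict (Set.Ioc (0 : ℝ) (2 * Real.pi)))
        (fun θ => u (z + ((r : ℂ) * Complex.exp (θ * Complex.I)) • w))

/-- The second derivative of `f` at `z` evaluated on the pair of vectors `(v, w)`. -/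
def hess2 (f : Cn n → ℝ) (z v w : Cn n) : ℝ := iteratedFDeriv ℝ 2 f z ![v, w]

/-- The (diagonal of the) Levi form `L_f(z; v) = ∑ ∂²f/∂z_j∂z̄_k v_j v̄_k` of a real-valued
`C²` function, expressed via real second derivatives. -/
def leviForm (f : Cn n → ℝ) (z v : Cn n) : ℝ :=
  (hess2 f z v v + hess2 f z ((Complex.I : ℂ) • v) ((Complex.I : ℂ) • v)) / 4

/-- The complex derivative `∂f(z)(v) = ∑_j ∂f/∂z_j(z) v_j` of a real-valued function. -/
def wirtingerDeriv (f : Cn n → ℝ) (z v : Cn n) : ℂ :=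
  (((fderiv ℝ f z v : ℝ) : ℂ) - Complex.I * ((fderiv ℝ f z ((Complex.I : ℂ) • v) : ℝ) : ℂ)) / 2

/-- The complex Hessian matrix `(∂²f/∂z_j∂z̄_k(z))_{j,k}` of a real-valued function,
expressed via real second derivatives. -/
def complexHessian (f : Cn n → ℝ) (z : Cn n) : Matrix (Fin n) (Fin n) ℂ :=
  Matrix.of fun j k =>
    (((hess2 f z (EuclideanSpace.single j 1) (EuclideanSpace.single k 1)
        + hess2 f z ((Complex.I : ℂ) • EuclideanSpace.single j 1)
            ((Complex.I : ℂ) • EuclideanSpace.single k 1)) / 4 : ℝ) : ℂ)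
    + Complex.I * (((hess2 f z (EuclideanSpace.single j 1)
            ((Complex.I : ℂ) • EuclideanSpace.single k 1)
        - hess2 f z ((Complex.I : ℂ) • EuclideanSpace.single j 1)
            (EuclideanSpace.single k 1)) / 4 : ℝ) : ℂ)

/-- The density of the Monge–Ampère measure `(dd^c f)^n` of a `C²` function `f` with respect
to Lebesgue measure: `(dd^c f)^n = 4^n n! det(∂²f/∂z_j∂z̄_k) dV`. -/
def maDensity (f : Cn n → ℝ) (z : Cn n) : ℝ :=
  (4 : ℝ) ^ n * (Nat.factorial n) * ((complexHessian f z).det).re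

/-- `v` is a decreasing sequence of `C²` plurisubharmonic functions on `Ω`
converging pointwise to `u`. -/
def IsSmoothPshApprox (Ω : Set (Cn n)) (u : Cn n → EReal) (v : ℕ → Cn n → ℝ) : Prop :=
  (∀ j, ContDiffOn ℝ 2 (v j) Ω) ∧
  (∀ j, PlurisubharmonicOn Ω fun z => ((v j z : ℝ) : EReal)) ∧
  (∀ z ∈ Ω, Antitone fun j => v j z) ∧
  (∀ z ∈ Ω, Tendsto (fun j => ((v j z : ℝ) : EReal)) atTop (nhds (u z)))

/-- `μ` is the (Bedford–Taylor–Cegrell) Monge–Ampère measure `(dd^c u)^n` of `u` on `Ω`: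
there is at least one decreasing `C²` plurisubharmonic approximation of `u` on `Ω`, and along
every such approximation the smooth Monge–Ampère measures converge weakly to `μ`. -/
def IsMongeAmpereOf (Ω : Set (Cn n)) (u : Cn n → EReal) (μ : Measure (Cn n)) : Prop :=
  (∃ v, IsSmoothPshApprox Ω u v) ∧
  ∀ v, IsSmoothPshApprox Ω u v →
    ∀ f : Cn n → ℝ, Continuous f → HasCompactSupport f → tsupport f ⊆ Ω →
      Tendsto (fun j => ∫ z in Ω, f z * maDensity (v j) z) atTop (nhds (∫ z, f z ∂μ))

/-- The Monge–Ampère measure `(dd^c u)^n` of `u` on `Ω` (junk value if it does not exist). -/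
def mongeAmpere (Ω : Set (Cn n)) (u : Cn n → EReal) : Measure (Cn n) :=
  letI := Classical.propDecidable (∃ μ, IsMongeAmpereOf Ω u μ)
  if h : ∃ μ, IsMongeAmpereOf Ω u μ then h.choose else 0

/-- The Cegrell class `𝓔₀(Ω)`: bounded plurisubharmonic functions on `Ω` with boundary
limit `0` and finite total Monge–Ampère mass. -/
def InE0 (Ω : Set (Cn n)) (u : Cn n → EReal) : Prop :=
  PlurisubharmonicOn Ω u ∧
  (∃ C : ℝ, ∀ z ∈ Ω, ((-C : ℝ) : EReal) ≤ u z ∧ u z ≤ ((C : ℝ) : EReal)) ∧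
  (∀ ξ ∈ frontier Ω, Tendsto u (nhdsWithin ξ Ω) (nhds (0 : EReal))) ∧
  mongeAmpere Ω u Ω < ⊤

/-- The Cegrell class `𝓕(Ω)`: plurisubharmonic `u` admitting a decreasing sequence in
`𝓔₀(Ω)` converging pointwise to `u` with uniformly bounded Monge–Ampère masses. -/
def InCegrellF (Ω : Set (Cn n)) (u : Cn n → EReal) : Prop :=
  PlurisubharmonicOn Ω u ∧
  ∃ v : ℕ → Cn n → EReal,
    (∀ j, InE0 Ω (v j)) ∧
    (∀ z ∈ Ω, Antitone fun j => v j z) ∧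
    (∀ z ∈ Ω, Tendsto (fun j => v j z) atTop (nhds (u z))) ∧
    (⨆ j, mongeAmpere Ω (v j) Ω) < ⊤

/-- A bounded strictly pseudoconvex domain: a bounded domain `Ω = {ρ < 0}` for some `C²`
defining function `ρ` on a neighborhood of `closure Ω` with nonvanishing gradient on `∂Ω`
and `dd^c ρ ≥ c · dd^c |z|²` for some `c > 0`. -/
def IsStrictlyPseudoconvexDomain (Ω : Set (Cn n)) : Prop :=
  IsOpen Ω ∧ IsConnected Ω ∧ Bornology.IsBounded Ω ∧
  ∃ (U : Set (Cn n)) (ρ : Cn n → ℝ) (c : ℝ),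
    IsOpen U ∧ closure Ω ⊆ U ∧ ContDiffOn ℝ 2 ρ U ∧
    Ω = {z ∈ U | ρ z < 0} ∧
    (∀ z ∈ frontier Ω, fderiv ℝ ρ z ≠ 0) ∧
    0 < c ∧ (∀ z ∈ U, ∀ v : Cn n, c * ‖v‖ ^ 2 ≤ leviForm ρ z v)

/-- A bounded hyperconvex domain: a bounded domain carrying a negative plurisubharmonic
exhaustion function. -/
def IsHyperconvexDomain (Ω : Set (Cn n)) : Prop :=
  IsOpen Ω ∧ IsConnected Ω ∧ Bornology.IsBounded Ω ∧
  ∃ φ : Cn n → EReal, PlurisubharmonicOn Ω φ ∧ (∀ z ∈ Ω, φ z < 0) ∧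
    ∀ c : ℝ, c < 0 →
      IsCompact (closure {z ∈ Ω | φ z < (c : EReal)}) ∧
        closure {z ∈ Ω | φ z < (c : EReal)} ⊆ Ω

/-- A maximal plurisubharmonic function on `Ω`. -/
def IsMaximalPSH (Ω : Set (Cn n)) (u : Cn n → EReal) : Prop :=
  PlurisubharmonicOn Ω u ∧
  ∀ v, PlurisubharmonicOn Ω v → ∀ K : Set (Cn n), IsCompact K → K ⊆ Ω →
    (∀ z ∈ Ω \ K, v z ≤ u z) → ∀ z ∈ Ω, v z ≤ u z

/-- The Cegrell class `𝓝(Ω)`: plurisubharmonic functions in the domain of definition of the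
Monge–Ampère operator whose smallest maximal plurisubharmonic majorant is identically zero. -/
def InClassN (Ω : Set (Cn n)) (u : Cn n → EReal) : Prop :=
  PlurisubharmonicOn Ω u ∧ (∃ μ, IsMongeAmpereOf Ω u μ) ∧ (∀ z ∈ Ω, u z ≤ 0) ∧
  ∀ w, IsMaximalPSH Ω w → (∀ z ∈ Ω, u z ≤ w z) → ∀ z ∈ Ω, (0 : EReal) ≤ w z

/-- The upper semicontinuous regularization `v*` of a function `v`. -/
def uscRegularization (f : Cn n → EReal) (z : Cn n) : EReal := Filter.limsup f (nhds z)


open Set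

instance : (volume : Measure (Cn n)).IsAddHaarMeasure := by
  have h := (PiLp.continuousLinearEquiv 2 ℝ (fun _ : Fin n => ℂ)).symm.isAddHaarMeasure_map
    (volume : Measure (Fin n → ℂ))
  rw [PiLp.coe_symm_continuousLinearEquiv] at h
  exact h

lemma cn_finrank (n : ℕ) : Module.finrank ℝ (Cn n) = 2 * n := by
  have h := Module.finrank_pi_fintype (M := fun _ : Fin n => ℂ) ℝ (ι := Fin n)
  simp [Complex.finrank_real_complex] at h
  have : Module.finrank ℝ (Cn n) = Module.finrank ℝ (∀ _ : Fin n, ℂ) :=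
    (WithLp.linearEquiv 2 ℝ (Fin n → ℂ)).finrank_eq
  rw [this, h]; ring

lemma vol_sec {s : Set (Cn n)} (hs : MeasurableSet s) {t : Set ℝ} (ht : MeasurableSet t) :
    volume {ξ : Cn n | ξ ≠ 0 ∧ (‖ξ‖⁻¹ • ξ) ∈ s ∧ ‖ξ‖ ∈ t} =
      (volume : Measure (Cn n)).toSphere ((Subtype.val) ⁻¹' s) *
        Measure.volumeIoiPow (2 * n - 1) ((Subtype.val) ⁻¹' t) := by
  have h0 : MeasurableSet ({0}ᶜ : Set (Cn n)) := (measurableSet_singleton 0).compl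
  have hemb : MeasurableEmbedding (Subtype.val : ({0}ᶜ : Set (Cn n)) → Cn n) :=
    MeasurableEmbedding.subtype_coe h0
  set B : Set (Cn n) := {ξ : Cn n | ξ ≠ 0 ∧ (‖ξ‖⁻¹ • ξ) ∈ s ∧ ‖ξ‖ ∈ t} with hB
  have hpre : (Subtype.val ⁻¹' B : Set ({0}ᶜ : Set (Cn n))) =
      (homeomorphUnitSphereProd (Cn n)) ⁻¹'
        (((Subtype.val) ⁻¹' s) ×ˢ ((Subtype.val) ⁻¹' t)) := by
    ext ⟨ξ, hξ⟩
    simp only [Set.mem_preimage, Set.mem_prod, hB, Set.mem_setOf_eq, Set.mem_compl_iff,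
      Set.mem_singleton_iff] at *
    simp [homeomorphUnitSphereProd, hξ]
    exact fun _ _ => hξ
  have hvol : volume B = (volume.comap (Subtype.val : ({0}ᶜ : Set (Cn n)) → Cn n))
      (Subtype.val ⁻¹' B) := by
    rw [hemb.comap_apply, Subtype.image_preimage_coe]
    congr 1
    ext ξ
    simp only [hB, Set.mem_inter_iff, Set.mem_setOf_eq, Set.mem_compl_iff,
      Set.mem_singleton_iff]
    tauto
  rw [hvol, hpre,
    (Measure.measurePreserving_homeomorphUnitSphereProd
      (volume : Measure (Cn n))).measure_preimage
      (((hs.preimage measurable_subtype_coe).prod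
        (ht.preimage measurable_subtype_coe)).nullMeasurableSet),
    Measure.prod_prod, cn_finrank]

lemma radial_eq (d : ℕ) {t : Set ℝ} (ht : MeasurableSet t) (hsub : t ⊆ Ioi 0) :
    Measure.volumeIoiPow d ((Subtype.val) ⁻¹' t : Set (Ioi (0:ℝ))) =
      ∫⁻ r in t, ENNReal.ofReal (r ^ d) := by
  rw [Measure.volumeIoiPow, withDensity_apply _ (ht.preimage measurable_subtype_coe),
    setLIntegral_subtype measurableSet_Ioi _ (fun r : ℝ => ENNReal.ofReal (r ^ d)),
    Subtype.image_preimage_coe, inter_eq_right.2 hsub]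

lemma lint_pow_le (d : ℕ) {u v : ℝ} {s : Set ℝ} (hsub : s ⊆ Icc u v)
    (hvol : volume s = ENNReal.ofReal (v - u)) (h0 : 0 ≤ u) :
    ∫⁻ r in s, ENNReal.ofReal (r ^ d) ≤ ENNReal.ofReal (v ^ d) * ENNReal.ofReal (v - u) := by
  calc ∫⁻ r in s, ENNReal.ofReal (r ^ d)
      ≤ ∫⁻ _ in s, ENNReal.ofReal (v ^ d) := by
        refine setLIntegral_mono (by fun_prop) fun r hr => ?_
        exact ENNReal.ofReal_le_ofReal (pow_le_pow_left₀ (h0.trans (hsub hr).1) (hsub hr).2 d)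
    _ = ENNReal.ofReal (v ^ d) * ENNReal.ofReal (v - u) := by
        rw [setLIntegral_const, hvol]

lemma lint_pow_ge (d : ℕ) {u v : ℝ} {s : Set ℝ} (hsub : s ⊆ Icc u v)
    (hvol : volume s = ENNReal.ofReal (v - u)) (h0 : 0 ≤ u) :
    ENNReal.ofReal (u ^ d) * ENNReal.ofReal (v - u) ≤ ∫⁻ r in s, ENNReal.ofReal (r ^ d) := by
  calc ENNReal.ofReal (u ^ d) * ENNReal.ofReal (v - u)
      = ∫⁻ _ in s, ENNReal.ofReal (u ^ d) := by rw [setLIntegral_const, hvol]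
    _ ≤ ∫⁻ r in s, ENNReal.ofReal (r ^ d) := by
        refine setLIntegral_mono (by fun_prop) fun r hr => ?_
        exact ENNReal.ofReal_le_ofReal (pow_le_pow_left₀ h0 (hsub hr).1 d)

set_option maxHeartbeats 1000000 in
theorem statement_13 {n : ℕ} :
    ∃ C₁ C₂ : ℝ, 0 < C₁ ∧ 0 < C₂ ∧
      ∀ (a ε : ℝ) (z : Cn n), 0 < ε → ε < 1 / 2 → 0 < a → a < 1 / 2 →
        1 / 2 < ‖z‖ → ‖z‖ < 1 - a →
        ENNReal.ofReal (C₁ * a ^ (2 * n - 1) * ε) <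
            volume {ξ : Cn n | ξ ≠ 0 ∧ ‖(‖z‖)⁻¹ • z - (‖ξ‖)⁻¹ • ξ‖ < a ∧
              ‖z‖ ≤ ‖ξ‖ ∧ ‖ξ‖ ≤ (1 + ε) * ‖z‖} ∧
          volume {ξ : Cn n | ξ ≠ 0 ∧ ‖(‖z‖)⁻¹ • z - (‖ξ‖)⁻¹ • ξ‖ < a ∧
              ‖z‖ ≤ ‖ξ‖ ∧ ‖ξ‖ ≤ (1 + ε) * ‖z‖} <
            ENNReal.ofReal (C₂ * a ^ (2 * n - 1) * ε) := by
  rcases Nat.eq_zero_or_pos n with hn | hn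
  · subst hn
    refine ⟨1, 1, one_pos, one_pos, ?_⟩
    intro a ε z _ _ _ _ hz _
    have hz0 : z = 0 := Subsingleton.elim z 0
    rw [hz0, norm_zero] at hz; linarith
  · set d := 2 * n with hd
    set m := 2 * n - 1 with hm
    have hdm : m + 1 = d := by omega
    set Vb := volume (ball (0 : Cn n) 1) with hVbdef
    have hVb_ne_top : Vb ≠ ⊤ := measure_ball_lt_top.ne
    set V' := Vb.toReal with hV'
    have hVb_eq : Vb = ENNReal.ofReal V' := (ENNReal.ofReal_toReal hVb_ne_top).symm
    have hV'pos : 0 < V' := ENNReal.toReal_pos (measure_ball_pos _ _ one_pos).ne' hVb_ne_top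
    refine ⟨V' * (1/2)^d / (8^d * (3/2)^m) / 2, 3^d * V' * (3/2)^m + 1,
      by positivity, by positivity, ?_⟩
    intro a ε z hε0 hε2 ha0 ha2 hzlow hzhigh
    have hR0 : (0:ℝ) < ‖z‖ := by linarith
    have hz0 : z ≠ 0 := by
      intro h; rw [h, norm_zero] at hR0; linarith
    haveI : Nontrivial (Cn n) := ⟨⟨z, 0, hz0⟩⟩
    set R := ‖z‖ with hRdef
    set e : Cn n := (‖z‖)⁻¹ • z with he_def
    have he : ‖e‖ = 1 := by
      rw [he_def, norm_smul, norm_inv, norm_norm, inv_mul_cancel₀ hR0.ne']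
    have hR1 : R < 1 := by linarith
    -- inner ball inside the unit-scale sector
    have hSubInner : ball ((1 + a/2) • e) (a/8) ⊆
        {ξ : Cn n | ξ ≠ 0 ∧ (‖ξ‖⁻¹ • ξ) ∈ ball e a ∧ ‖ξ‖ ∈ Ioo 1 (1+a)} := by
      intro ξ hξ
      rw [mem_ball, dist_eq_norm] at hξ
      have hcn : ‖(1 + a/2) • e‖ = 1 + a/2 := by
        rw [norm_smul, he, mul_one, Real.norm_eq_abs, abs_of_pos (by linarith)]
      have h2abs : |‖ξ‖ - (1 + a/2)| < a/8 := by
        calc |‖ξ‖ - (1 + a/2)| = |‖ξ‖ - ‖(1 + a/2) • e‖| := by rw [hcn]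
          _ ≤ ‖ξ - (1 + a/2) • e‖ := abs_norm_sub_norm_le _ _
          _ < a/8 := hξ
      have h2 := abs_lt.1 h2abs
      have hξ1 : 1 < ‖ξ‖ := by cases h2; linarith
      have hξa : ‖ξ‖ < 1 + a := by cases h2; linarith
      have hξ0 : ξ ≠ 0 := by
        intro h; rw [h, norm_zero] at hξ1; linarith
      refine ⟨hξ0, ?_, hξ1, hξa⟩
      rw [mem_ball, dist_eq_norm]
      have hξn : (‖ξ‖ : ℝ) ≠ 0 := by positivity
      have hkey : ‖ξ‖⁻¹ • ξ - e = ‖ξ‖⁻¹ • (ξ - ‖ξ‖ • e) := by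
        rw [smul_sub, smul_smul, inv_mul_cancel₀ hξn, one_smul]
      have hsplit : ξ - ‖ξ‖ • e = (ξ - (1 + a/2) • e) + ((1 + a/2) - ‖ξ‖) • e := by
        rw [sub_smul]; abel
      have hinv1 : (‖ξ‖)⁻¹ ≤ 1 := by
        rw [inv_le_one_iff₀]; right; linarith
      calc ‖‖ξ‖⁻¹ • ξ - e‖ = ‖ξ‖⁻¹ * ‖ξ - ‖ξ‖ • e‖ := by
            rw [hkey, norm_smul, norm_inv, norm_norm]
        _ ≤ 1 * ‖ξ - ‖ξ‖ • e‖ := mul_le_mul_of_nonneg_right hinv1 (norm_nonneg _)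
        _ = ‖ξ - ‖ξ‖ • e‖ := one_mul _
        _ ≤ ‖ξ - (1 + a/2) • e‖ + ‖((1 + a/2) - ‖ξ‖) • e‖ := by
            rw [hsplit]; exact norm_add_le _ _
        _ < a/8 + a/8 := by
            refine add_lt_add hξ ?_
            rw [norm_smul, he, mul_one, Real.norm_eq_abs, abs_sub_comm]
            exact h2abs
        _ < a := by linarith
    -- unit-scale sector inside outer ball
    have hSubOuter : {ξ : Cn n | ξ ≠ 0 ∧ (‖ξ‖⁻¹ • ξ) ∈ ball e a ∧ ‖ξ‖ ∈ Ioo 1 (1+a)} ⊆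
        ball e (3*a) := by
      rintro ξ ⟨hξ0, hball, h1, h2⟩
      rw [mem_ball, dist_eq_norm] at hball ⊢
      have hsplit : ξ - e = ‖ξ‖ • (‖ξ‖⁻¹ • ξ - e) + (‖ξ‖ - 1) • e := by
        rw [smul_sub, smul_smul, mul_inv_cancel₀ (norm_ne_zero_iff.2 hξ0), one_smul,
          sub_smul, one_smul]
        abel
      calc ‖ξ - e‖ ≤ ‖‖ξ‖ • (‖ξ‖⁻¹ • ξ - e)‖ + ‖(‖ξ‖ - 1) • e‖ := by
            rw [hsplit]; exact norm_add_le _ _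
        _ = ‖ξ‖ * ‖‖ξ‖⁻¹ • ξ - e‖ + |‖ξ‖ - 1| := by
            rw [norm_smul, norm_norm, norm_smul, he, mul_one, Real.norm_eq_abs]
        _ < (1 + a) * a + a := by
            refine add_lt_add_of_le_of_lt ?_ ?_
            · exact mul_le_mul h2.le hball.le (norm_nonneg _) (by linarith)
            · rw [abs_lt]; constructor <;> linarith
        _ ≤ 3 * a := by nlinarith
    -- but the mul_le_mul above gives ≤, while we need <; adjust: it's fine since second part strict
    have hSineq := vol_sec (n := n) (s := ball e a) measurableSet_ball
      (t := Ioo 1 (1+a)) measurableSet_Ioo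
    have hBineq := vol_sec (n := n) (s := ball e a) measurableSet_ball
      (t := Icc R ((1+ε)*R)) measurableSet_Icc
    set T := (volume : Measure (Cn n)).toSphere
      ((Subtype.val : sphere (0:Cn n) 1 → Cn n) ⁻¹' ball e a) with hT
    set K := Measure.volumeIoiPow (2*n-1)
      ((Subtype.val : Ioi (0:ℝ) → ℝ) ⁻¹' Ioo 1 (1+a)) with hK
    set J := Measure.volumeIoiPow (2*n-1)
      ((Subtype.val : Ioi (0:ℝ) → ℝ) ⁻¹' Icc R ((1+ε)*R)) with hJ
    -- radial bounds
    have hKrad : K = ∫⁻ r in Ioo 1 (1+a), ENNReal.ofReal (r ^ m) := by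
      rw [hK, radial_eq _ measurableSet_Ioo (fun x hx => lt_trans one_pos hx.1)]
    have hJrad : J = ∫⁻ r in Icc R ((1+ε)*R), ENNReal.ofReal (r ^ m) := by
      refine radial_eq _ measurableSet_Icc fun x hx => ?_
      exact lt_of_lt_of_le hR0 hx.1
    have hKlow : ENNReal.ofReal a ≤ K := by
      rw [hKrad]
      have := lint_pow_ge m (u := 1) (v := 1+a) (s := Ioo 1 (1+a))
        (fun x hx => ⟨hx.1.le, hx.2.le⟩) (by rw [Real.volume_Ioo]) zero_le_one
      simpa using this
    have hKhigh : K ≤ ENNReal.ofReal ((3/2)^m * a) := by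
      rw [hKrad]
      refine le_trans (lint_pow_le m (u := 1) (v := 1+a) (s := Ioo 1 (1+a))
        (fun x hx => ⟨hx.1.le, hx.2.le⟩) (by rw [Real.volume_Ioo]) zero_le_one) ?_
      rw [← ENNReal.ofReal_mul (by positivity)]
      refine ENNReal.ofReal_le_ofReal ?_
      have h1 : (1+a)^m ≤ (3/2:ℝ)^m := pow_le_pow_left₀ (by linarith) (by linarith) m
      have h2 : (1+a:ℝ) - 1 = a := by ring
      rw [h2]
      exact mul_le_mul_of_nonneg_right h1 ha0.le
    have hIccsub : Icc R ((1+ε)*R) ⊆ Icc R ((1+ε)*R) := subset_rfl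
    have hIccvol : volume (Icc R ((1+ε)*R)) = ENNReal.ofReal ((1+ε)*R - R) := Real.volume_Icc
    have hJlow : ENNReal.ofReal ((1/2)^d * ε) ≤ J := by
      rw [hJrad]
      refine le_trans ?_ (lint_pow_ge m hIccsub hIccvol hR0.le)
      rw [← ENNReal.ofReal_mul (by positivity)]
      refine ENNReal.ofReal_le_ofReal ?_
      have hpow : (1/2:ℝ)^d ≤ R^d := pow_le_pow_left₀ (by norm_num) hzlow.le d
      have hRd : R^m * ((1+ε)*R - R) = R^d * ε := by rw [← hdm, pow_succ]; ring
      rw [hRd]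
      exact mul_le_mul_of_nonneg_right hpow hε0.le
    have hJhigh : J ≤ ENNReal.ofReal ((3/2)^m * ε) := by
      rw [hJrad]
      refine le_trans (lint_pow_le m hIccsub hIccvol hR0.le) ?_
      rw [← ENNReal.ofReal_mul (by positivity)]
      refine ENNReal.ofReal_le_ofReal ?_
      have h32 : (1+ε)*R ≤ 3/2 := by
        have h := mul_le_mul (by linarith : (1+ε:ℝ) ≤ 3/2) hR1.le hR0.le (by norm_num)
        linarith
      have hpow : ((1+ε)*R)^m ≤ (3/2:ℝ)^m := pow_le_pow_left₀ (by positivity) h32 m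
      have h2 : (1+ε)*R - R = ε * R := by ring
      rw [h2]
      have hεR : ε * R ≤ ε := mul_le_of_le_one_right hε0.le hR1.le
      exact mul_le_mul hpow hεR (by positivity) (by positivity)
    -- ball volume formulas
    have hball_inner : volume (ball ((1 + a/2) • e) (a/8)) = ENNReal.ofReal ((a/8)^d) * Vb := by
      rw [Measure.addHaar_ball volume _ (by positivity : (0:ℝ) ≤ a/8), cn_finrank]
    have hball_outer : volume (ball e (3*a)) = ENNReal.ofReal ((3*a)^d) * Vb := by
      rw [Measure.addHaar_ball volume _ (by positivity : (0:ℝ) ≤ 3*a), cn_finrank]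
    have hInner : ENNReal.ofReal ((a/8)^d) * Vb ≤ T * K := by
      rw [← hball_inner, ← hSineq]
      exact measure_mono hSubInner
    have hOuter : T * K ≤ ENNReal.ofReal ((3*a)^d) * Vb := by
      rw [← hball_outer, ← hSineq]
      exact measure_mono hSubOuter
    -- the target set
    set Bset := {ξ : Cn n | ξ ≠ 0 ∧ ‖(‖z‖)⁻¹ • z - (‖ξ‖)⁻¹ • ξ‖ < a ∧
        ‖z‖ ≤ ‖ξ‖ ∧ ‖ξ‖ ≤ (1 + ε) * ‖z‖} with hBset
    have hBeq : Bset = {ξ : Cn n | ξ ≠ 0 ∧ (‖ξ‖⁻¹ • ξ) ∈ ball e a ∧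
        ‖ξ‖ ∈ Icc R ((1+ε)*R)} := by
      ext ξ
      simp only [hBset, Set.mem_setOf_eq, mem_ball, dist_eq_norm, Set.mem_Icc, he_def, hRdef]
      rw [norm_sub_rev]
    have hBvol : volume Bset = T * J := by rw [hBeq, hBineq]
    -- lower chain
    have chainLow : ENNReal.ofReal ((a/8)^d * V' * ((1/2)^d * ε)) ≤
        volume Bset * ENNReal.ofReal ((3/2)^m * a) := by
      calc ENNReal.ofReal ((a/8)^d * V' * ((1/2)^d * ε))
          = (ENNReal.ofReal ((a/8)^d) * Vb) * ENNReal.ofReal ((1/2)^d * ε) := by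
            rw [hVb_eq, ← ENNReal.ofReal_mul (by positivity),
              ← ENNReal.ofReal_mul (by positivity)]
        _ ≤ (T * K) * J := mul_le_mul' hInner hJlow
        _ = (T * J) * K := by ring
        _ ≤ (T * J) * ENNReal.ofReal ((3/2)^m * a) := mul_le_mul_right hKhigh _
        _ = volume Bset * ENNReal.ofReal ((3/2)^m * a) := by rw [hBvol]
    have volLow : ENNReal.ofReal ((a/8)^d * V' * ((1/2)^d * ε) / ((3/2)^m * a)) ≤
        volume Bset := by
      rw [ENNReal.ofReal_div_of_pos (by positivity)]
      refine (ENNReal.div_le_iff_le_mul (Or.inl ?_) (Or.inl ENNReal.ofReal_ne_top)).2 chainLow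
      simp only [ne_eq, ENNReal.ofReal_eq_zero, not_le]
      positivity
    -- upper chain
    have chainHigh : volume Bset * ENNReal.ofReal a ≤
        ENNReal.ofReal ((3*a)^d * V' * ((3/2)^m * ε)) := by
      calc volume Bset * ENNReal.ofReal a = (T * J) * ENNReal.ofReal a := by rw [hBvol]
        _ ≤ (T * J) * K := mul_le_mul_right hKlow _
        _ = (T * K) * J := by ring
        _ ≤ (ENNReal.ofReal ((3*a)^d) * Vb) * ENNReal.ofReal ((3/2)^m * ε) :=
            mul_le_mul' hOuter hJhigh
        _ = ENNReal.ofReal ((3*a)^d * V' * ((3/2)^m * ε)) := by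
            rw [hVb_eq, ← ENNReal.ofReal_mul (by positivity),
              ← ENNReal.ofReal_mul (by positivity)]
    have volHigh : volume Bset ≤
        ENNReal.ofReal ((3*a)^d * V' * ((3/2)^m * ε) / a) := by
      rw [ENNReal.ofReal_div_of_pos ha0]
      refine (ENNReal.le_div_iff_mul_le (Or.inl ?_) (Or.inl ENNReal.ofReal_ne_top)).2 chainHigh
      simp only [ne_eq, ENNReal.ofReal_eq_zero, not_le]
      positivity
    have had : (a:ℝ)^d = a^m * a := by rw [← hdm, pow_succ]
    constructor
    · refine lt_of_lt_of_le ?_ volLow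
      rw [ENNReal.ofReal_lt_ofReal_iff (by positivity)]
      have hkeyeq : (a/8)^d * V' * ((1/2)^d * ε) / ((3/2)^m * a) =
          (V' * (1/2)^d / (8^d * (3/2)^m)) * a^m * ε := by
        rw [div_pow, had]
        field_simp
      rw [hkeyeq]
      have hpm : (0:ℝ) < a^m := pow_pos ha0 m
      have hc : (0:ℝ) < V' * (1/2)^d / (8^d * (3/2)^m) := by positivity
      nlinarith [mul_pos (mul_pos hc hpm) hε0]
    · refine lt_of_le_of_lt volHigh ?_
      rw [ENNReal.ofReal_lt_ofReal_iff (by positivity)]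
      have hkeyeq : (3*a)^d * V' * ((3/2)^m * ε) / a =
          (3^d * V' * (3/2)^m) * a^m * ε := by
        rw [mul_pow, had]
        field_simp
      rw [hkeyeq]
      have hpm : (0:ℝ) < a^m := pow_pos ha0 m
      nlinarith [mul_pos hpm hε0]


end
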